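/- arXiv:1302.4860 — 6 statements merged into one kernel-verified Lean document; each statement's English description precedes it below -/
import Mathlib

section
/- Let A(s) be a quadratic matrix polynomial with A₀ invertible and N its Stroh companion matrix. Then for every complex s which is not an eigenvalue of A, the resolvent identity A(s)⁻¹ = L(sI − N)⁻¹R holds, where L = [I 0] and R = [0 I]ᵀ. -/
open Matrix

/-- Resolvent identity for the Stroh companion matrix:
`A(s)⁻¹ = L (sI − N)⁻¹ R`, where `L = [I 0]` and `R = [0 I]ᵀ`,
whenever `s` is not an eigenvalue of the polynomial `A`. -/
theorem stmt4 {n : ℕ} (A₀ A₁ A₂ : Matrix (Fin n) (Fin n) ℂ)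
    (hA₀ : IsUnit A₀.det)
    (A : ℂ → Matrix (Fin n) (Fin n) ℂ)
    (hA : ∀ s : ℂ, A s = s ^ 2 • A₀ + s • (A₁ + A₁ᴴ) + A₂)
    (N : Matrix (Fin n ⊕ Fin n) (Fin n ⊕ Fin n) ℂ)
    (hN : N = Matrix.fromBlocks (-(A₀⁻¹ * A₁)) A₀⁻¹
        (-A₂ + A₁ᴴ * A₀⁻¹ * A₁) (-(A₁ᴴ * A₀⁻¹)))
    (L : Matrix (Fin n) (Fin n ⊕ Fin n) ℂ)
    (hL : L = Matrix.of fun i j => Sum.elim (fun j' => if i = j' then (1 : ℂ) else 0)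
        (fun _ => 0) j)
    (R : Matrix (Fin n ⊕ Fin n) (Fin n) ℂ)
    (hR : R = Matrix.of fun i j => Sum.elim (fun _ => (0 : ℂ))
        (fun i' => if i' = j then 1 else 0) i)
    (s : ℂ) (hs : IsUnit (A s).det) :
    (A s)⁻¹ = L * (s • 1 - N)⁻¹ * R := by
  have h1 : A₀ * A₀⁻¹ = 1 := Matrix.mul_nonsing_inv A₀ hA₀
  have h2 : A₀⁻¹ * A₀ = 1 := Matrix.nonsing_inv_mul A₀ hA₀
  have hS1 : A s * (A s)⁻¹ = 1 := Matrix.mul_nonsing_inv _ hs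
  set S : Matrix (Fin n) (Fin n) ℂ := A s with hSdef
  set E : Matrix (Fin n) (Fin n) ℂ := s • 1 + A₁ᴴ * A₀⁻¹ with hE
  set g : Matrix (Fin n) (Fin n) ℂ := -(s • A₀ + A₁) with hg
  set F : Matrix (Fin n ⊕ Fin n) (Fin n ⊕ Fin n) ℂ :=
    Matrix.fromBlocks (-(A₀⁻¹)) 0 E 1 with hF
  set G : Matrix (Fin n ⊕ Fin n) (Fin n ⊕ Fin n) ℂ :=
    Matrix.fromBlocks g 1 S 0 with hG
  set F' : Matrix (Fin n ⊕ Fin n) (Fin n ⊕ Fin n) ℂ :=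
    Matrix.fromBlocks (-A₀) 0 (E * A₀) 1 with hF'
  set G' : Matrix (Fin n ⊕ Fin n) (Fin n ⊕ Fin n) ℂ :=
    Matrix.fromBlocks 0 S⁻¹ 1 (-(g * S⁻¹)) with hG'
  have hb11 : s • (1 : Matrix (Fin n) (Fin n) ℂ) - -(A₀⁻¹ * A₁) = (-(A₀⁻¹)) * g + 0 * S := by
    simp only [hg, hE, mul_neg, neg_mul, neg_neg, mul_add, zero_mul, add_zero,
      mul_smul_comm, h2, mul_one]
    module
  have hb12 : s • (0 : Matrix (Fin n) (Fin n) ℂ) - A₀⁻¹ = (-(A₀⁻¹)) * 1 + 0 * 0 := by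
    simp
  have hb21 : s • (0 : Matrix (Fin n) (Fin n) ℂ) - (-A₂ + A₁ᴴ * A₀⁻¹ * A₁) = E * g + 1 * S := by
    simp only [hg, hE, hSdef, hA, mul_neg, neg_mul, neg_neg, mul_add, add_mul, one_mul,
      smul_mul_assoc, mul_smul_comm, smul_smul, ← pow_two, mul_assoc, h2, mul_one, smul_zero,
      smul_add, one_mul]
    module
  have hb22 : s • (1 : Matrix (Fin n) (Fin n) ℂ) - -(A₁ᴴ * A₀⁻¹) = E * 1 + 1 * 0 := by
    simp [hE]
  have hFG : s • (1 : Matrix (Fin n ⊕ Fin n) (Fin n ⊕ Fin n) ℂ) - N = F * G := by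
    rw [hN, hF, hG, Matrix.fromBlocks_multiply, ← Matrix.fromBlocks_one,
      Matrix.fromBlocks_smul, sub_eq_add_neg, Matrix.fromBlocks_neg, Matrix.fromBlocks_add]
    rw [← hb11, ← hb12, ← hb21, ← hb22]
    simp [sub_eq_add_neg]
  have hFF' : F * F' = 1 := by
    rw [hF, hF', Matrix.fromBlocks_multiply]
    rw [show (-(A₀⁻¹)) * (-A₀) + (0 : Matrix (Fin n) (Fin n) ℂ) * (E * A₀) = 1 by
      simp [h2]]
    rw [show E * (-A₀) + (1 : Matrix (Fin n) (Fin n) ℂ) * (E * A₀) = 0 by simp]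
    simp [Matrix.fromBlocks_one]
  have hGG' : G * G' = 1 := by
    rw [hG, hG', Matrix.fromBlocks_multiply]
    simp [hS1, Matrix.fromBlocks_one]
  have hMX : (s • (1 : Matrix (Fin n ⊕ Fin n) (Fin n ⊕ Fin n) ℂ) - N) * (G' * F') = 1 := by
    rw [hFG, mul_assoc, ← mul_assoc G, hGG', one_mul, hFF']
  have hinv : (s • (1 : Matrix (Fin n ⊕ Fin n) (Fin n ⊕ Fin n) ℂ) - N)⁻¹ = G' * F' :=
    Matrix.inv_eq_right_inv hMX
  have hLc : L = Matrix.fromCols 1 0 := by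
    rw [hL]
    ext i (j | j) <;> simp [Matrix.fromCols, Matrix.one_apply]
  have hRr : R = Matrix.fromRows 0 1 := by
    rw [hR]
    ext (i | i) j <;> simp [Matrix.fromRows_apply_inl, Matrix.fromRows_apply_inr, Matrix.one_apply]
  rw [hinv, hLc, hRr, hG', hF', Matrix.fromBlocks_multiply,
    Matrix.fromCols_mul_fromBlocks, Matrix.fromCols_mul_fromRows]
  simp
end

section
/- Uniqueness of spectral factorization: Let A(s) be a self-adjoint quadratic matrix polynomial with A₀ positive definite and no real eigenvalues. Suppose A(s) = (sI − Q₁*)A₀(sI − Q₁) = (sI − Q₂*)A₀(sI − Q₂) for all s, where both Q₁ and Q₂ have all their eigenvalues in the open upper half-plane. Then Q₁ = Q₂. -/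
open Matrix
open scoped ComplexOrder

open Polynomial in
private lemma stmt7_isUnit_list_prod {M : Type*} [Monoid M] :
    ∀ L : List M, (∀ x ∈ L, IsUnit x) → IsUnit L.prod := by
  intro L
  induction L with
  | nil => simp
  | cons a t ih =>
      intro h
      rw [List.prod_cons]
      exact (h a (List.mem_cons_self (a := a) (l := t))).mul (ih fun x hx => h x (List.mem_cons_of_mem a hx))

private lemma stmt7_eval_charpoly {n : ℕ} (M : Matrix (Fin n) (Fin n) ℂ) (r : ℂ) :
    (M.charpoly).eval r = (r • (1 : Matrix (Fin n) (Fin n) ℂ) - M).det := by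
  rw [Matrix.charpoly, ← Polynomial.coe_evalRingHom, RingHom.map_det]
  congr 1
  ext i j
  by_cases h : i = j <;>
    simp [h, Matrix.charmatrix_apply, Matrix.one_apply, Matrix.smul_apply, Matrix.sub_apply]

open Polynomial in
private lemma stmt7_unit {n : ℕ} (Q₁ Q₂ : Matrix (Fin n) (Fin n) ℂ)
    (hQ₁ : ∀ μ ∈ spectrum ℂ Q₁, 0 < μ.im)
    (hQ₂ : ∀ μ ∈ spectrum ℂ Q₂, 0 < μ.im) :
    IsUnit (aeval Q₁ᴴ Q₂.charpoly) := by
  obtain ⟨l, hl⟩ : ∃ l : List ℂ, Q₂.charpoly.roots = ↑l :=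
    ⟨Q₂.charpoly.roots.toList, (Q₂.charpoly.roots.coe_toList).symm⟩
  have hsplit : Q₂.charpoly = (l.map (fun r => X - C r)).prod := by
    conv_lhs => rw [(IsAlgClosed.splits Q₂.charpoly).eq_prod_roots_of_monic
      Q₂.charpoly_monic]
    rw [hl, Multiset.map_coe, Multiset.prod_coe]
  rw [hsplit, map_list_prod, List.map_map]
  refine stmt7_isUnit_list_prod _ ?_
  intro a ha
  obtain ⟨r, hr, rfl⟩ := List.mem_map.mp ha
  simp only [Function.comp_apply, map_sub, aeval_X, aeval_C]
  have hr' : r ∈ Q₂.charpoly.roots := by rw [hl]; exact Multiset.mem_coe.mpr hr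
  have hroot : (Q₂.charpoly).eval r = 0 :=
    (Polynomial.mem_roots (Q₂.charpoly_monic.ne_zero)).mp hr'
  have hspec : r ∈ spectrum ℂ Q₂ := by
    rw [spectrum.mem_iff, Algebra.algebraMap_eq_smul_one, Matrix.isUnit_iff_isUnit_det]
    rw [stmt7_eval_charpoly] at hroot
    simp [hroot]
  have him : 0 < r.im := hQ₂ r hspec
  by_contra hcon
  rw [Matrix.isUnit_iff_isUnit_det, isUnit_iff_ne_zero, not_not] at hcon
  have hdet2 : ((Q₁ᴴ - algebraMap ℂ _ r)ᴴ).det = 0 := by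
    rw [Matrix.det_conjTranspose, hcon, star_zero]
  have hform : (Q₁ᴴ - algebraMap ℂ _ r)ᴴ = Q₁ - algebraMap ℂ _ (star r) := by
    simp [Matrix.conjTranspose_sub, Algebra.algebraMap_eq_smul_one,
      Matrix.conjTranspose_smul]
  rw [hform] at hdet2
  have hspec1 : (star r) ∈ spectrum ℂ Q₁ := by
    rw [spectrum.mem_iff]
    intro hu
    rw [← IsUnit.neg_iff, neg_sub, Matrix.isUnit_iff_isUnit_det, hdet2] at hu
    exact hu.ne_zero rfl
  have := hQ₁ _ hspec1
  simp only [Complex.star_def, Complex.conj_im] at this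
  linarith

/-- Uniqueness of the spectral factorization: two spectral factors `Q₁`, `Q₂`
with all eigenvalues in the open upper half-plane coincide. -/
theorem stmt7 {n : ℕ} (A₀ A₁ A₂ Q₁ Q₂ : Matrix (Fin n) (Fin n) ℂ)
    (hA₀ : A₀.PosDef) (hA₂ : A₂.IsHermitian)
    (A : ℂ → Matrix (Fin n) (Fin n) ℂ)
    (hA : ∀ s : ℂ, A s = s ^ 2 • A₀ + s • (A₁ + A₁ᴴ) + A₂)
    (hreg : ∀ t : ℝ, IsUnit (A (t : ℂ)).det)
    (hQ₁ : ∀ μ ∈ spectrum ℂ Q₁, 0 < μ.im)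
    (hQ₂ : ∀ μ ∈ spectrum ℂ Q₂, 0 < μ.im)
    (hfac₁ : ∀ s : ℂ, A s = (s • 1 - Q₁ᴴ) * A₀ * (s • 1 - Q₁))
    (hfac₂ : ∀ s : ℂ, A s = (s • 1 - Q₂ᴴ) * A₀ * (s • 1 - Q₂)) :
    Q₁ = Q₂ := by
  classical
  have key : ∀ s : ℂ, (s • 1 - Q₁ᴴ) * A₀ * (s • 1 - Q₁) = (s • 1 - Q₂ᴴ) * A₀ * (s • 1 - Q₂) :=
    fun s => (hfac₁ s).symm.trans (hfac₂ s)
  have h0 : Q₁ᴴ * A₀ * Q₁ = Q₂ᴴ * A₀ * Q₂ := by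
    have := key 0
    simp only [zero_smul, zero_sub, neg_mul, mul_neg, neg_neg] at this
    exact this
  have hlin : Q₁ᴴ * A₀ + A₀ * Q₁ = Q₂ᴴ * A₀ + A₀ * Q₂ := by
    have h1 := key 1
    simp only [one_smul] at h1
    linear_combination (norm := noncomm_ring) h0 - h1
  set Y := A₀ * (Q₁ - Q₂) with hY
  have hsemi : Q₁ᴴ * Y = Y * Q₂ := by
    have h2 : (Q₁ᴴ * A₀ + A₀ * Q₁) * Q₂ = (Q₂ᴴ * A₀ + A₀ * Q₂) * Q₂ := by rw [hlin]
    rw [hY]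
    linear_combination (norm := noncomm_ring) h0 - h2
  have hpow : ∀ k : ℕ, Q₁ᴴ ^ k * Y = Y * Q₂ ^ k := by
    intro k
    induction k with
    | zero => simp
    | succ k ih =>
        rw [pow_succ, pow_succ, mul_assoc, hsemi, ← mul_assoc, ih, mul_assoc]
  have hp : ∀ p : Polynomial ℂ, (Polynomial.aeval Q₁ᴴ p) * Y = Y * (Polynomial.aeval Q₂ p) := by
    intro p
    induction p using Polynomial.induction_on' with
    | add p q hp' hq' => simp only [map_add, add_mul, mul_add, hp', hq']
    | monomial k c =>
        simp only [Polynomial.aeval_monomial]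
        rw [mul_assoc, hpow k, ← mul_assoc, Algebra.commutes c Y, mul_assoc]
  have hCH : (Polynomial.aeval Q₁ᴴ Q₂.charpoly) * Y = 0 := by
    rw [hp, Matrix.aeval_self_charpoly, mul_zero]
  have hY0 : Y = 0 := ((stmt7_unit Q₁ Q₂ hQ₁ hQ₂).mul_right_eq_zero).mp hCH
  have hinv : IsUnit A₀ := (Matrix.isUnit_iff_isUnit_det A₀).mpr
    (isUnit_iff_ne_zero.mpr (ne_of_gt hA₀.det_pos))
  have hdiff : Q₁ - Q₂ = 0 := (hinv.mul_right_eq_zero).mp hY0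
  exact sub_eq_zero.mp hdiff
end

section
/- Hermiticity of the surface impedance tensor: Let A₀ be positive definite Hermitian, A₁ an arbitrary n×n complex matrix, and Q an n×n matrix with spectrum in the open upper half-plane satisfying the solvency equation A₀Q² + (A₁+A₁*)Q + A₂ − c²ρI = 0, where A₂ is Hermitian, c, ρ real. Then Z := −i(A₀Q + A₁) is Hermitian, i.e., Z* = Z. -/
open Matrix
open scoped ComplexOrder

lemma eval_charpoly_aux {n : ℕ} (M : Matrix (Fin n) (Fin n) ℂ) (μ : ℂ) :
    M.charpoly.eval μ = (μ • (1 : Matrix (Fin n) (Fin n) ℂ) - M).det := by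
  rw [Matrix.charpoly, ← Polynomial.coe_evalRingHom, RingHom.map_det]
  congr 1
  ext i j
  by_cases h : i = j
  · subst h
    simp [Matrix.charmatrix_apply_eq]
  · simp [Matrix.charmatrix_apply_ne _ _ _ h, Matrix.one_apply_ne h]

lemma mem_spectrum_of_root {n : ℕ} (M : Matrix (Fin n) (Fin n) ℂ) (μ : ℂ)
    (h : M.charpoly.eval μ = 0) : μ ∈ spectrum ℂ M := by
  rw [spectrum.mem_iff]
  intro hu
  rw [Matrix.isUnit_iff_isUnit_det, isUnit_iff_ne_zero, Algebra.algebraMap_eq_smul_one,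
    ← eval_charpoly_aux] at hu
  exact hu h

/-- Hermiticity of the surface impedance tensor: if `Q` has spectrum in the
open upper half-plane and satisfies the solvency equation
`A₀Q² + (A₁+A₁ᴴ)Q + A₂ − c²ρ I = 0`, then `Z = −i(A₀Q + A₁)` is Hermitian. -/
theorem stmt10 {n : ℕ} (A₀ A₁ A₂ Q : Matrix (Fin n) (Fin n) ℂ)
    (hA₀ : A₀.PosDef) (hA₂ : A₂.IsHermitian)
    (c ρ : ℝ)
    (hQ : ∀ μ ∈ spectrum ℂ Q, 0 < μ.im)
    (hsolv : A₀ * Q ^ 2 + (A₁ + A₁ᴴ) * Q + A₂ - ((c ^ 2 * ρ : ℝ) : ℂ) • 1 = 0)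
    (Z : Matrix (Fin n) (Fin n) ℂ)
    (hZ : Z = (-Complex.I) • (A₀ * Q + A₁)) :
    Zᴴ = Z := by
  rcases Nat.eq_zero_or_pos n with hn | hn
  · subst hn; exact Subsingleton.elim _ _
  have hA0H : A₀ᴴ = A₀ := hA₀.isHermitian
  -- rearranged solvency equation
  have hs : A₀ * Q ^ 2 + (A₁ + A₁ᴴ) * Q = ((c ^ 2 * ρ : ℝ) : ℂ) • 1 - A₂ := by
    rw [eq_sub_iff_add_eq, ← sub_eq_zero]
    exact hsolv
  -- conjugate transpose of solvency equation
  have hsH : Qᴴ ^ 2 * A₀ + Qᴴ * (A₁ + A₁ᴴ) = ((c ^ 2 * ρ : ℝ) : ℂ) • 1 - A₂ := by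
    have h := congrArg conjTranspose hs
    simp only [conjTranspose_add, conjTranspose_mul, conjTranspose_sub, conjTranspose_smul,
      conjTranspose_pow, conjTranspose_conjTranspose, hA0H, hA₂.eq, conjTranspose_one,
      Complex.star_def, Complex.conj_ofReal] at h
    rw [← h]
    ring_nf
    rw [add_comm A₁ᴴ A₁]
  -- Sylvester equation for D = Zᴴ - Z
  have hZH : Zᴴ = Complex.I • (Qᴴ * A₀ + A₁ᴴ) := by
    rw [hZ]
    simp [conjTranspose_smul, conjTranspose_add, conjTranspose_mul, hA0H, Complex.star_def]
  have hcomm : Qᴴ * (Zᴴ - Z) = (Zᴴ - Z) * Q := by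
    have key : Qᴴ * (Zᴴ - Z) - (Zᴴ - Z) * Q
        = Complex.I • ((Qᴴ ^ 2 * A₀ + Qᴴ * (A₁ + A₁ᴴ)) - (A₀ * Q ^ 2 + (A₁ + A₁ᴴ) * Q)) := by
      rw [hZH, hZ]
      simp only [neg_smul, sub_neg_eq_add, ← smul_add, mul_smul_comm, smul_mul_assoc, ← smul_sub]
      congr 1
      noncomm_ring
    rw [← sub_eq_zero, key, hsH, hs, sub_self, smul_zero]
  -- polynomial commutation
  have hpow : ∀ k : ℕ, Qᴴ ^ k * (Zᴴ - Z) = (Zᴴ - Z) * Q ^ k := by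
    intro k
    induction k with
    | zero => simp
    | succ k ih =>
      rw [pow_succ, pow_succ, mul_assoc, hcomm, ← mul_assoc, ih, mul_assoc]
  have hpoly : ∀ p : Polynomial ℂ,
      (Polynomial.aeval Qᴴ p) * (Zᴴ - Z) = (Zᴴ - Z) * (Polynomial.aeval Q p) := by
    intro p
    induction p using Polynomial.induction_on' with
    | add p q hp hq => simp [add_mul, mul_add, hp, hq]
    | monomial k a =>
      simp only [Polynomial.aeval_monomial]
      rw [mul_assoc, hpow k, ← mul_assoc, ← mul_assoc, Algebra.commutes]
  -- apply with the characteristic polynomial of Q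
  have hmain := hpoly Q.charpoly
  rw [Matrix.aeval_self_charpoly, mul_zero] at hmain
  -- the evaluation at Qᴴ is invertible
  have hunit : IsUnit (Polynomial.aeval Qᴴ Q.charpoly) := by
    rw [← spectrum.zero_notMem_iff ℂ]
    intro h0
    have hdeg : 0 < Q.charpoly.degree := by
      refine Polynomial.natDegree_pos_iff_degree_pos.mp ?_
      rw [Matrix.charpoly_natDegree_eq_dim]
      simpa using hn
    rw [spectrum.map_polynomial_aeval_of_degree_pos Qᴴ _ hdeg] at h0
    obtain ⟨μ, hμ, hev⟩ := h0
    have h1 : μ ∈ spectrum ℂ Q := mem_spectrum_of_root Q μ hev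
    have h2 : (starRingEnd ℂ) μ ∈ spectrum ℂ Q := by
      have : spectrum ℂ (Qᴴ) = star (spectrum ℂ Q) := by
        rw [← Matrix.star_eq_conjTranspose, spectrum.map_star]
      rw [this, Set.mem_star] at hμ
      exact hμ
    have := hQ μ h1
    have := hQ _ h2
    simp only [Complex.conj_im] at this
    linarith
  have hD : Zᴴ - Z = 0 := hunit.mul_left_cancel (by rw [hmain, mul_zero])
  rw [sub_eq_zero] at hD
  exact hD
end

section
/- Equal dimension of spectral subspaces: Let A(s) = A₀s² + (A₁+A₁*)s + A₂ be a self-adjoint quadratic matrix polynomial of n×n matrices with A₀ positive definite and A(s) positive definite for every real s. Let N be the Stroh companion matrix of A. Then N has no real eigenvalues, and the sum of generalized eigenspaces of N for eigenvalues with positive imaginary part has dimension exactly n (and likewise for negative imaginary part). -/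
open Matrix Module
open scoped ComplexOrder

private lemma aux_finrank_finset_sup {K V ι : Type*} [Field K] [AddCommGroup V] [Module K V]
    [FiniteDimensional K V] (t : ι → Submodule K V) (ht : iSupIndep t) (F : Finset ι) :
    Module.finrank K ↥(F.sup t) = ∑ i ∈ F, Module.finrank K ↥(t i) := by
  classical
  induction F using Finset.induction_on with
  | empty => simp
  | @insert a F ha ih =>
    have hd : Disjoint (t a) (F.sup t) := by
      have h := ht.disjoint_biSup (x := a) (y := (↑F : Set ι)) (by simpa using ha)
      simpa [Finset.sup_eq_iSup] using h
    have h2 := Submodule.finrank_sup_add_finrank_inf_eq (t a) (F.sup t)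
    rw [disjoint_iff.mp hd] at h2
    rw [Finset.sup_insert, Finset.sum_insert ha, ← ih]
    simpa using h2

private lemma aux_conj_pow {R m : Type*} [CommRing R] [Fintype m] [DecidableEq m]
    (T B : Matrix m m R) (hTT : T * T = 1) (k : ℕ) :
    (T * B * T) ^ k = T * B ^ k * T := by
  induction k with
  | zero => simpa [pow_zero] using hTT.symm
  | succ k ih =>
    rw [pow_succ, pow_succ, ih]
    calc T * B ^ k * T * (T * B * T) = T * B ^ k * (T * T) * (B * T) := by
          simp only [Matrix.mul_assoc]
    _ = T * (B ^ k * B) * T := by rw [hTT]; simp only [Matrix.mul_one, Matrix.mul_assoc]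

set_option maxHeartbeats 1600000 in
/-- Equal dimension of spectral subspaces: if the self-adjoint quadratic matrix
polynomial `A(s)` with `A₀` positive definite is positive definite for every
real `s`, then its Stroh companion matrix `N` has no real eigenvalues and the
sums of generalized eigenspaces of `N` over the open upper and lower
half-planes each have dimension exactly `n`. -/
theorem stmt16 {n : ℕ} (A₀ A₁ A₂ : Matrix (Fin n) (Fin n) ℂ)
    (hA₀ : A₀.PosDef) (hA₂ : A₂.IsHermitian)
    (A : ℂ → Matrix (Fin n) (Fin n) ℂ)
    (hA : ∀ s : ℂ, A s = s ^ 2 • A₀ + s • (A₁ + A₁ᴴ) + A₂)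
    (hpos : ∀ t : ℝ, (A (t : ℂ)).PosDef)
    (N : Matrix (Fin n ⊕ Fin n) (Fin n ⊕ Fin n) ℂ)
    (hN : N = Matrix.fromBlocks (-(A₀⁻¹ * A₁)) A₀⁻¹
        (-A₂ + A₁ᴴ * A₀⁻¹ * A₁) (-(A₁ᴴ * A₀⁻¹)))
    (f : Module.End ℂ ((Fin n ⊕ Fin n) → ℂ)) (hf : f = Matrix.toLin' N)
    (Yp Ym : Submodule ℂ ((Fin n ⊕ Fin n) → ℂ))
    (hYp : Yp = ⨆ μ ∈ {μ : ℂ | 0 < μ.im}, f.maxGenEigenspace μ)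
    (hYm : Ym = ⨆ μ ∈ {μ : ℂ | μ.im < 0}, f.maxGenEigenspace μ) :
    (∀ t : ℝ, (t : ℂ) ∉ spectrum ℂ N) ∧
      Module.finrank ℂ Yp = n ∧ Module.finrank ℂ Ym = n := by
  classical
  have hA₀det : IsUnit A₀.det := hA₀.det_pos.ne'.isUnit
  have hA₀inv : A₀ * A₀⁻¹ = 1 := Matrix.mul_nonsing_inv _ hA₀det
  have hA₀inv' : A₀⁻¹ * A₀ = 1 := Matrix.nonsing_inv_mul _ hA₀det
  -- Kernel fact
  have hker : ∀ (t : ℝ) (x : (Fin n ⊕ Fin n) → ℂ), N *ᵥ x = (t : ℂ) • x → x = 0 := by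
    intro t x hx
    set x₁ : Fin n → ℂ := x ∘ Sum.inl with hx₁def
    set x₂ : Fin n → ℂ := x ∘ Sum.inr with hx₂def
    have hxe : x = Sum.elim x₁ x₂ := by funext i; cases i <;> rfl
    rw [hxe, hN, Matrix.fromBlocks_mulVec] at hx
    have hsm : (t : ℂ) • Sum.elim x₁ x₂ = Sum.elim ((t:ℂ) • x₁) ((t:ℂ) • x₂) := by
      funext i; cases i <;> rfl
    rw [hsm] at hx
    have e1 : -(A₀⁻¹ * A₁) *ᵥ x₁ + A₀⁻¹ *ᵥ x₂ = (t:ℂ) • x₁ :=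
      funext fun i => congrFun hx (Sum.inl i)
    have e2 : (-A₂ + A₁ᴴ * A₀⁻¹ * A₁) *ᵥ x₁ + (-(A₁ᴴ * A₀⁻¹)) *ᵥ x₂ = (t:ℂ) • x₂ :=
      funext fun i => congrFun hx (Sum.inr i)
    have hx2 : x₂ = A₁ *ᵥ x₁ + (t:ℂ) • (A₀ *ᵥ x₁) := by
      have h := congrArg (fun v => A₀ *ᵥ v) e1
      simp only [Matrix.mulVec_add, Matrix.mulVec_mulVec, Matrix.mulVec_smul,
        Matrix.neg_mulVec, Matrix.mulVec_neg, Matrix.mul_neg, hA₀inv,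
        Matrix.one_mulVec] at h
      have h2 : -((A₀ * (A₀⁻¹ * A₁)) *ᵥ x₁) + x₂ = (t:ℂ) • (A₀ *ᵥ x₁) := by
        simpa [Matrix.mulVec_add, Matrix.mulVec_smul] using h
      have h3 : A₀ * (A₀⁻¹ * A₁) = A₁ := by
        rw [← Matrix.mul_assoc, hA₀inv, Matrix.one_mul]
      rw [h3] at h2
      linear_combination (norm := module) h2
    have hAx : A (t:ℂ) *ᵥ x₁ = 0 := by
      rw [hA]
      have key : (A₁ᴴ * A₀⁻¹) *ᵥ (A₁ *ᵥ x₁ + (t:ℂ) • (A₀ *ᵥ x₁))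
          = (A₁ᴴ * A₀⁻¹ * A₁) *ᵥ x₁ + (t:ℂ) • (A₁ᴴ *ᵥ x₁) := by
        simp only [Matrix.mulVec_add, Matrix.mulVec_smul, Matrix.mulVec_mulVec]
        have : A₁ᴴ * A₀⁻¹ * A₀ = A₁ᴴ := by
          rw [Matrix.mul_assoc, hA₀inv', Matrix.mul_one]
        rw [this]
      rw [hx2, Matrix.neg_mulVec, key] at e2
      simp only [Matrix.add_mulVec, Matrix.neg_mulVec, Matrix.smul_mulVec,
        Matrix.mulVec_add, Matrix.mulVec_smul] at e2 ⊢
      linear_combination (norm := module) -e2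
    have hx₁0 : x₁ = 0 := by
      by_contra hne
      have h := (hpos t).dotProduct_mulVec_pos hne
      rw [hAx, dotProduct_zero] at h
      exact lt_irrefl _ h
    have hx₂0 : x₂ = 0 := by rw [hx2, hx₁0]; simp
    rw [hxe, hx₁0, hx₂0]
    funext i; cases i <;> rfl
  -- toLin' as algebra equiv
  have hNf : Matrix.toLinAlgEquiv' N = f := by
    rw [hf]
    apply LinearMap.ext; intro v
    simp [Matrix.toLinAlgEquiv'_apply, Matrix.toLin'_apply]
  -- Part 1: no real spectrum
  have hspec : ∀ t : ℝ, (t : ℂ) ∉ spectrum ℂ N := by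
    intro t ht
    have h1 : spectrum ℂ f = spectrum ℂ N := by
      rw [← hNf]; exact AlgEquiv.spectrum_eq Matrix.toLinAlgEquiv' N
    have h2 : f.HasEigenvalue (t : ℂ) :=
      Module.End.hasEigenvalue_iff_mem_spectrum.mpr (h1 ▸ ht)
    obtain ⟨v, hv⟩ := h2.exists_hasEigenvector
    have : N *ᵥ v = (t : ℂ) • v := by
      have := hv.apply_eq_smul
      rwa [hf, Matrix.toLin'_apply] at this
    exact hv.2 (hker t v this)
  -- injectivity of f - t for real t
  have hEbot : ∀ t : ℝ, f.maxGenEigenspace (t:ℂ) = ⊥ := by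
    intro t
    have hinj : ∀ y, (f - (t:ℂ) • 1) y = 0 → y = 0 := by
      intro y hy
      apply hker t y
      have h1 : f y - (t:ℂ) • y = 0 := by simpa using hy
      rw [sub_eq_zero, hf, Matrix.toLin'_apply] at h1
      exact h1
    have hk : ∀ (k : ℕ) (y), ((f - (t:ℂ) • 1) ^ k) y = 0 → y = 0 := by
      intro k
      induction k with
      | zero => intro y hy; simpa using hy
      | succ k ih =>
        intro y hy
        rw [pow_succ, Module.End.mul_apply] at hy
        exact hinj y (ih _ hy)
    rw [eq_bot_iff]
    intro x hx
    rw [Module.End.mem_maxGenEigenspace] at hx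
    obtain ⟨k, hk'⟩ := hx
    exact Submodule.mem_bot ℂ |>.mpr (hk k x hk')
  -- The symmetry matrix T
  set T : Matrix (Fin n ⊕ Fin n) (Fin n ⊕ Fin n) ℂ := Matrix.fromBlocks 0 1 1 0 with hT
  have hTT : T * T = 1 := by
    rw [hT, Matrix.fromBlocks_multiply]
    simp [Matrix.fromBlocks_one]
  have hTunit : IsUnit T.det :=
    (Matrix.isUnit_iff_isUnit_det T).mp ⟨⟨T, T, hTT, hTT⟩, rfl⟩
  have hA₀iH : A₀⁻¹ᴴ = A₀⁻¹ := hA₀.1.inv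
  have hNH : Nᴴ = T * N * T := by
    rw [hN, hT, Matrix.fromBlocks_conjTranspose, Matrix.fromBlocks_multiply,
      Matrix.fromBlocks_multiply]
    simp only [Matrix.zero_mul, Matrix.one_mul, Matrix.mul_zero, Matrix.mul_one,
      add_zero, zero_add]
    have h11 : (-(A₀⁻¹ * A₁))ᴴ = -(A₁ᴴ * A₀⁻¹) := by
      simp [Matrix.conjTranspose_mul, hA₀iH]
    have h21 : (-A₂ + A₁ᴴ * A₀⁻¹ * A₁)ᴴ = -A₂ + A₁ᴴ * A₀⁻¹ * A₁ := by
      simp [Matrix.conjTranspose_add, Matrix.conjTranspose_mul, hA₀iH, hA₂.eq,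
        Matrix.mul_assoc]
    have h22 : (-(A₁ᴴ * A₀⁻¹))ᴴ = -(A₀⁻¹ * A₁) := by
      simp [Matrix.conjTranspose_mul, hA₀iH]
    rw [h11, h21, h22, hA₀iH]
  have hNH' : ∀ c : ℂ, Nᴴ - c • 1 = T * (N - c • 1) * T := by
    intro c
    rw [hNH, Matrix.mul_sub, Matrix.sub_mul]
    congr 1
    rw [Matrix.mul_smul, Matrix.mul_one, Matrix.smul_mul, hTT]
  -- rank symmetry
  have hrank : ∀ (μ : ℂ) (k : ℕ),
      ((N - μ • 1) ^ k).rank = ((N - (starRingEnd ℂ μ) • 1) ^ k).rank := by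
    intro μ k
    calc ((N - μ • 1) ^ k).rank = (((N - μ • 1) ^ k)ᴴ).rank :=
          (Matrix.rank_conjTranspose _).symm
    _ = (((N - μ • 1)ᴴ) ^ k).rank := by rw [Matrix.conjTranspose_pow]
    _ = ((Nᴴ - (starRingEnd ℂ μ) • 1) ^ k).rank := by
          rw [Matrix.conjTranspose_sub, Matrix.conjTranspose_smul,
            Matrix.conjTranspose_one, starRingEnd_apply]
    _ = ((T * (N - (starRingEnd ℂ μ) • 1) * T) ^ k).rank := by rw [hNH']
    _ = (T * ((N - (starRingEnd ℂ μ) • 1) ^ k * T)).rank := by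
          rw [aux_conj_pow _ _ hTT, Matrix.mul_assoc]
    _ = ((N - (starRingEnd ℂ μ) • 1) ^ k * T).rank :=
          Matrix.rank_mul_eq_right_of_isUnit_det T _ hTunit
    _ = ((N - (starRingEnd ℂ μ) • 1) ^ k).rank :=
          Matrix.rank_mul_eq_left_of_isUnit_det T _ hTunit
  -- dimension formula
  have hdim : ∀ μ : ℂ, finrank ℂ (f.maxGenEigenspace μ)
      + ((N - μ • 1) ^ (finrank ℂ ((Fin n ⊕ Fin n) → ℂ))).rank
      = finrank ℂ ((Fin n ⊕ Fin n) → ℂ) := by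
    intro μ
    have h1 : f.maxGenEigenspace μ = LinearMap.ker
        (((N - μ • 1) ^ (finrank ℂ ((Fin n ⊕ Fin n) → ℂ))).mulVecLin) := by
      rw [Module.End.maxGenEigenspace_eq_genEigenspace_finrank,
        Module.End.genEigenspace_nat]
      congr 1
      have hsub : f - μ • 1 = Matrix.toLinAlgEquiv' (N - μ • 1) := by
        rw [map_sub, hNf, _root_.map_smul, _root_.map_one]
      rw [hsub, ← map_pow]
      apply LinearMap.ext; intro v
      simp only [Matrix.toLinAlgEquiv'_apply, Matrix.mulVecLin_apply]
    rw [h1]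
    have h2 := LinearMap.finrank_range_add_finrank_ker
      (((N - μ • 1) ^ (finrank ℂ ((Fin n ⊕ Fin n) → ℂ))).mulVecLin)
    have h3 : ((N - μ • 1) ^ (finrank ℂ ((Fin n ⊕ Fin n) → ℂ))).rank
        = finrank ℂ (LinearMap.range (((N - μ • 1)
          ^ (finrank ℂ ((Fin n ⊕ Fin n) → ℂ))).mulVecLin)) := rfl
    rw [h3]
    omega
  have hdconj : ∀ μ : ℂ, finrank ℂ (f.maxGenEigenspace μ)
      = finrank ℂ (f.maxGenEigenspace (starRingEnd ℂ μ)) := by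
    intro μ
    have h1 := hdim μ
    have h2 := hdim (starRingEnd ℂ μ)
    rw [hrank μ] at h1
    omega
  -- bookkeeping
  have hind : iSupIndep f.maxGenEigenspace := f.independent_maxGenEigenspace
  have hfin : {μ : ℂ | f.maxGenEigenspace μ ≠ ⊥}.Finite :=
    WellFoundedGT.finite_ne_bot_of_iSupIndep hind
  set σ : Finset ℂ := hfin.toFinset with hσ
  have hmemσ : ∀ μ : ℂ, μ ∈ σ ↔ f.maxGenEigenspace μ ≠ ⊥ := by
    intro μ; rw [hσ, Set.Finite.mem_toFinset]; rfl
  have hbisup : ∀ s : Set ℂ, (⨆ μ ∈ s, f.maxGenEigenspace μ)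
      = (σ.filter (· ∈ s)).sup f.maxGenEigenspace := by
    intro s
    apply le_antisymm
    · refine iSup₂_le fun μ hμ => ?_
      by_cases h : f.maxGenEigenspace μ = ⊥
      · rw [h]; exact bot_le
      · exact Finset.le_sup (Finset.mem_filter.mpr ⟨(hmemσ μ).mpr h, hμ⟩)
    · refine Finset.sup_le fun μ hμ => ?_
      exact le_iSup₂_of_le μ (Finset.mem_filter.mp hμ).2 le_rfl
  have hrankSum : ∀ s : Set ℂ, finrank ℂ ↥(⨆ μ ∈ s, f.maxGenEigenspace μ)
      = ∑ μ ∈ σ.filter (· ∈ s), finrank ℂ ↥(f.maxGenEigenspace μ) := by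
    intro s
    rw [hbisup s, aux_finrank_finset_sup f.maxGenEigenspace hind]
  -- total dimension
  have hmn : finrank ℂ ((Fin n ⊕ Fin n) → ℂ) = n + n := by
    simp [Module.finrank_pi]
  have htotal : ∑ μ ∈ σ, finrank ℂ ↥(f.maxGenEigenspace μ) = n + n := by
    have h1 : (⨆ μ ∈ (Set.univ : Set ℂ), f.maxGenEigenspace μ)
        = (⊤ : Submodule ℂ ((Fin n ⊕ Fin n) → ℂ)) := by
      rw [iSup_univ]; exact f.iSup_maxGenEigenspace_eq_top
    have h2 := hrankSum Set.univ
    rw [h1, finrank_top, hmn] at h2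
    simp only [Set.mem_univ, Finset.filter_true] at h2
    exact h2.symm
  -- members of σ have nonzero imaginary part
  have himσ : ∀ μ ∈ σ, μ.im ≠ 0 := by
    intro μ hμ him
    have hre : μ = ((μ.re : ℝ) : ℂ) := Complex.ext (by simp) (by simp [him])
    exact (hmemσ μ).mp hμ (hre ▸ hEbot μ.re)
  -- split σ
  have hsplit : ∑ μ ∈ σ.filter (· ∈ {μ : ℂ | 0 < μ.im}), finrank ℂ ↥(f.maxGenEigenspace μ)
      + ∑ μ ∈ σ.filter (· ∈ {μ : ℂ | μ.im < 0}), finrank ℂ ↥(f.maxGenEigenspace μ)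
      = n + n := by
    rw [← htotal]
    have hneg : σ.filter (fun μ => ¬ (μ ∈ {μ : ℂ | 0 < μ.im}))
        = σ.filter (· ∈ {μ : ℂ | μ.im < 0}) := by
      apply Finset.filter_congr
      intro μ hμ
      have him := himσ μ hμ
      simp only [Set.mem_setOf_eq, not_lt]
      exact ⟨fun h => lt_of_le_of_ne h him, fun h => le_of_lt h⟩
    rw [← hneg]
    exact Finset.sum_filter_add_sum_filter_not σ _ _
  -- conjugation bijection between the two sums
  have hconjsum : ∑ μ ∈ σ.filter (· ∈ {μ : ℂ | 0 < μ.im}), finrank ℂ ↥(f.maxGenEigenspace μ)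
      = ∑ μ ∈ σ.filter (· ∈ {μ : ℂ | μ.im < 0}), finrank ℂ ↥(f.maxGenEigenspace μ) := by
    have hconjσ : ∀ μ : ℂ, μ ∈ σ → (starRingEnd ℂ μ) ∈ σ := by
      intro μ hμ
      rw [hmemσ] at hμ ⊢
      intro hbot
      apply hμ
      rw [← Submodule.finrank_eq_zero] at hbot ⊢
      rw [hdconj μ]
      exact hbot
    refine Finset.sum_nbij' (i := fun μ => starRingEnd ℂ μ) (j := fun μ => starRingEnd ℂ μ)
      ?_ ?_ ?_ ?_ ?_
    · intro μ hμ
      rw [Finset.mem_filter] at hμ ⊢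
      refine ⟨hconjσ μ hμ.1, ?_⟩
      have := hμ.2
      simp only [Set.mem_setOf_eq, Complex.conj_im] at this ⊢
      linarith
    · intro μ hμ
      rw [Finset.mem_filter] at hμ ⊢
      refine ⟨hconjσ μ hμ.1, ?_⟩
      have := hμ.2
      simp only [Set.mem_setOf_eq, Complex.conj_im] at this ⊢
      linarith
    · intro μ _; simp
    · intro μ _; simp
    · intro μ _; exact hdconj μ
  -- conclude
  refine ⟨hspec, ?_, ?_⟩
  · have h1 : finrank ℂ ↥Yp
        = ∑ μ ∈ σ.filter (· ∈ {μ : ℂ | 0 < μ.im}), finrank ℂ ↥(f.maxGenEigenspace μ) := by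
      rw [hYp]; exact hrankSum _
    omega
  · have h1 : finrank ℂ ↥Ym
        = ∑ μ ∈ σ.filter (· ∈ {μ : ℂ | μ.im < 0}), finrank ℂ ↥(f.maxGenEigenspace μ) := by
      rw [hYm]; exact hrankSum _
    omega
end

section
/- Spectral factorization of positive definite quadratic matrix polynomials: Let A(s) = A₀s² + (A₁+A₁*)s + A₂ be a quadratic polynomial of n×n complex matrices with A₀ positive definite, A₂ Hermitian, and A(s) invertible for every real s. Then there exists a unique n×n matrix Q with all eigenvalues in the open upper half-plane such that A(s) = (sI − Q*)A₀(sI − Q) for all complex s. -/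
open Matrix
open scoped ComplexOrder

namespace Stmt17Aux

variable {n : ℕ}

/-- helper: if an endomorphism is nonzero at a generalized-eigen-killed vector... -/
lemma hasEigenvalue_of_pow_eq_zero {V : Type*} [AddCommGroup V] [Module ℂ V]
    (f : Module.End ℂ V) (μ : ℂ) (k : ℕ) (w : V) (hw : w ≠ 0)
    (h : ((f - μ • (1 : Module.End ℂ V)) ^ k) w = 0) : f.HasEigenvalue μ := by
  apply Module.End.hasEigenvalue_of_hasGenEigenvalue (k := k)
  rw [Module.End.HasGenEigenvalue, Module.End.HasUnifEigenvalue]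
  intro hbot
  have : w ∈ f.genEigenspace μ k := Module.End.mem_genEigenspace_nat.2 h
  rw [hbot] at this
  exact hw (Submodule.mem_bot ℂ |>.1 this)

/-- Sylvester-type uniqueness: if `X * D = D * Y` and the spectra of `X` and `Y`
are disjoint, then `D = 0`. -/
lemma sylvester (X Y D : Matrix (Fin n) (Fin n) ℂ)
    (h : X * D = D * Y)
    (hdisj : ∀ μ : ℂ, μ ∈ spectrum ℂ X → μ ∈ spectrum ℂ Y → False) : D = 0 := by
  let E := Matrix.toLinAlgEquiv' (R := ℂ) (n := Fin n)
  have hED : E D = 0 := by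
    have hcomm : ∀ μ : ℂ, (E X - μ • 1) * E D = E D * (E Y - μ • 1) := by
      intro μ
      have := congrArg E h
      rw [_root_.map_mul, _root_.map_mul] at this
      simp only [sub_mul, mul_sub, this, smul_mul_assoc, mul_smul_comm, one_mul, mul_one]
    have hpow : ∀ (μ : ℂ) (k : ℕ),
        ((E X - μ • 1) ^ k) * E D = E D * ((E Y - μ • 1) ^ k) := by
      intro μ k
      induction k with
      | zero => simp
      | succ k ih => rw [pow_succ, pow_succ, mul_assoc, hcomm, ← mul_assoc, ih, mul_assoc]
    have hker : ∀ v, E D v = 0 := by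
      have htop := Module.End.iSup_maxGenEigenspace_eq_top (K := ℂ) (f := E Y)
      intro v
      have hv : v ∈ (⊤ : Submodule ℂ (Fin n → ℂ)) := trivial
      rw [← htop] at hv
      revert v
      suffices hle : (⨆ μ : ℂ, Module.End.maxGenEigenspace (E Y) μ) ≤ LinearMap.ker (E D) by
        intro v hv; exact LinearMap.mem_ker.1 (hle hv)
      apply iSup_le
      intro μ v hv
      rw [Module.End.mem_maxGenEigenspace] at hv
      obtain ⟨k, hk⟩ := hv
      rw [LinearMap.mem_ker]
      by_contra hDv
      have hxv : (((E X) - μ • 1) ^ k) (E D v) = 0 := by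
        have := congrArg (fun (f : Module.End ℂ (Fin n → ℂ)) => f v) (hpow μ k)
        simp only [Module.End.mul_apply] at this
        rw [this, hk, map_zero]
      have hvne : v ≠ 0 := by
        intro hv0; apply hDv; rw [hv0, map_zero]
      have h1 : Module.End.HasEigenvalue (E X) μ := hasEigenvalue_of_pow_eq_zero _ _ k _ hDv hxv
      have h2 : Module.End.HasEigenvalue (E Y) μ := hasEigenvalue_of_pow_eq_zero _ _ k _ hvne hk
      have m1 : μ ∈ spectrum ℂ X := by
        rw [← AlgEquiv.spectrum_eq E X]
        exact Module.End.hasEigenvalue_iff_mem_spectrum.1 h1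
      have m2 : μ ∈ spectrum ℂ Y := by
        rw [← AlgEquiv.spectrum_eq E Y]
        exact Module.End.hasEigenvalue_iff_mem_spectrum.1 h2
      exact hdisj μ m1 m2
    exact LinearMap.ext hker
  have := congrArg E.symm hED
  simpa using this

lemma spectrum_conjTranspose (Q : Matrix (Fin n) (Fin n) ℂ) (μ : ℂ) :
    μ ∈ spectrum ℂ Qᴴ ↔ (starRingEnd ℂ) μ ∈ spectrum ℂ Q := by
  rw [spectrum.mem_iff, spectrum.mem_iff]
  have hkey : algebraMap ℂ (Matrix (Fin n) (Fin n) ℂ) μ - Qᴴ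
      = (algebraMap ℂ (Matrix (Fin n) (Fin n) ℂ) ((starRingEnd ℂ) μ) - Q)ᴴ := by
    rw [conjTranspose_sub, Algebra.algebraMap_eq_smul_one, Algebra.algebraMap_eq_smul_one,
      conjTranspose_smul, conjTranspose_one]
    simp
  rw [hkey, Matrix.isUnit_iff_isUnit_det, Matrix.isUnit_iff_isUnit_det, det_conjTranspose,
    isUnit_star]

end Stmt17Aux
namespace Stmt17Aux2

/-- Sesquilinear-form orthogonality of generalized eigenspaces of a form-selfadjoint
endomorphism, abstract version. -/
lemma orth_aux {V : Type*} [AddCommGroup V] [Module ℂ V] (C : Module.End ℂ V)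
    (φ : V → V → ℂ)
    (hadd_l : ∀ u w v, φ (u + w) v = φ u v + φ w v)
    (hsmul_l : ∀ (a : ℂ) u v, φ (a • u) v = star a * φ u v)
    (hadd_r : ∀ u v w, φ u (v + w) = φ u v + φ u w)
    (hsmul_r : ∀ (a : ℂ) u v, φ u (a • v) = a * φ u v)
    (hsa : ∀ u v, φ (C u) v = φ u (C v)) :
    ∀ (N j k : ℕ) (l m : ℂ), (starRingEnd ℂ) l ≠ m → j + k ≤ N →
      ∀ u v, ((C - l • 1) ^ j) u = 0 → ((C - m • 1) ^ k) v = 0 → φ u v = 0 := by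
  have hzero_l : ∀ v, φ 0 v = 0 := by
    intro v
    have := hsmul_l 0 0 v
    simpa using this
  have hzero_r : ∀ u, φ u 0 = 0 := by
    intro u
    have := hsmul_r 0 u 0
    simpa using this
  have hsub_l : ∀ u w v, φ (u - w) v = φ u v - φ w v := by
    intro u w v
    have h1 : φ (u - w + w) v = φ (u - w) v + φ w v := hadd_l _ _ _
    rw [sub_add_cancel] at h1
    exact eq_sub_of_add_eq h1.symm
  have hsub_r : ∀ u v w, φ u (v - w) = φ u v - φ u w := by
    intro u v w
    have h1 : φ u (v - w + w) = φ u (v - w) + φ u w := hadd_r _ _ _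
    rw [sub_add_cancel] at h1
    exact eq_sub_of_add_eq h1.symm
  intro N
  induction N with
  | zero =>
    intro j k l m hne hjk u v hu hv
    have hj0 : j = 0 := by omega
    subst hj0
    simp only [pow_zero, Module.End.one_apply] at hu
    rw [hu]; exact hzero_l v
  | succ N ih =>
    intro j k l m hne hjk u v hu hv
    match j, k with
    | 0, k =>
      simp only [pow_zero, Module.End.one_apply] at hu
      rw [hu]; exact hzero_l v
    | j+1, 0 =>
      simp only [pow_zero, Module.End.one_apply] at hv
      rw [hv]; exact hzero_r u
    | j+1, k+1 =>
      set u' := (C - l • 1) u with hu'def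
      set v' := (C - m • 1) v with hv'def
      have hu' : ((C - l • 1) ^ j) u' = 0 := by
        rw [hu'def, ← Module.End.mul_apply, ← pow_succ]; exact hu
      have hv' : ((C - m • 1) ^ k) v' = 0 := by
        rw [hv'def, ← Module.End.mul_apply, ← pow_succ]; exact hv
      have e1 : φ u v' = 0 := ih (j + 1) k l m hne (by omega) u v' hu hv'
      have e2 : φ u' v = 0 := ih j (k + 1) l m hne (by omega) u' v hu' hv
      have key : φ u v' - φ u' v = ((starRingEnd ℂ) l - m) * φ u v := by
        have c1 : φ u v' = φ u (C v) - m * φ u v := by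
          rw [hv'def]
          have : (C - m • 1) v = C v - m • v := by
            simp [LinearMap.sub_apply, LinearMap.smul_apply]
          rw [this, hsub_r, hsmul_r]
        have c2 : φ u' v = φ u (C v) - (starRingEnd ℂ) l * φ u v := by
          rw [hu'def]
          have : (C - l • 1) u = C u - l • u := by
            simp [LinearMap.sub_apply, LinearMap.smul_apply]
          rw [this, hsub_l, hsmul_l, hsa]
          rfl
        rw [c1, c2]; ring
      rw [e1, e2] at key
      have : ((starRingEnd ℂ) l - m) * φ u v = 0 := by linear_combination -key
      rcases mul_eq_zero.1 this with h | h
      · exact absurd (sub_eq_zero.1 h) hne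
      · exact h

/-- One-sided orthogonality against an `iSup` of generalized eigenspaces. -/
lemma orth_iSup_right {V : Type*} [AddCommGroup V] [Module ℂ V] (C : Module.End ℂ V)
    (φ : V → V → ℂ)
    (hadd_l : ∀ u w v, φ (u + w) v = φ u v + φ w v)
    (hsmul_l : ∀ (a : ℂ) u v, φ (a • u) v = star a * φ u v)
    (hadd_r : ∀ u v w, φ u (v + w) = φ u v + φ u w)
    (hsmul_r : ∀ (a : ℂ) u v, φ u (a • v) = a * φ u v)
    (hsa : ∀ u v, φ (C u) v = φ u (C v))
    (l : ℂ) (j : ℕ) (u : V) (hu : ((C - l • 1) ^ j) u = 0)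
    (T : Set ℂ) (hT : ∀ m ∈ T, (starRingEnd ℂ) l ≠ m) :
    ∀ v ∈ ⨆ m : T, Module.End.maxGenEigenspace C (m : ℂ), φ u v = 0 := by
  let ψ : V →ₗ[ℂ] ℂ :=
    { toFun := fun v => φ u v
      map_add' := fun v w => hadd_r u v w
      map_smul' := fun a v => by simpa using hsmul_r a u v }
  suffices hle : (⨆ m : T, Module.End.maxGenEigenspace C (m : ℂ)) ≤ LinearMap.ker ψ by
    intro v hv; exact LinearMap.mem_ker.1 (hle hv)
  apply iSup_le
  rintro ⟨m, hm⟩ v hv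
  rw [Module.End.mem_maxGenEigenspace] at hv
  obtain ⟨k, hk⟩ := hv
  rw [LinearMap.mem_ker]
  exact orth_aux C φ hadd_l hsmul_l hadd_r hsmul_r hsa (j + k) j k l m (hT m hm) le_rfl u v hu hk

/-- Two-sided orthogonality between `iSup`s of generalized eigenspaces. -/
lemma orth_iSup {V : Type*} [AddCommGroup V] [Module ℂ V] (C : Module.End ℂ V)
    (φ : V → V → ℂ)
    (hadd_l : ∀ u w v, φ (u + w) v = φ u v + φ w v)
    (hsmul_l : ∀ (a : ℂ) u v, φ (a • u) v = star a * φ u v)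
    (hadd_r : ∀ u v w, φ u (v + w) = φ u v + φ u w)
    (hsmul_r : ∀ (a : ℂ) u v, φ u (a • v) = a * φ u v)
    (hsa : ∀ u v, φ (C u) v = φ u (C v))
    (S T : Set ℂ) (hST : ∀ l ∈ S, ∀ m ∈ T, (starRingEnd ℂ) l ≠ m) :
    ∀ u ∈ ⨆ l : S, Module.End.maxGenEigenspace C (l : ℂ),
    ∀ v ∈ ⨆ m : T, Module.End.maxGenEigenspace C (m : ℂ), φ u v = 0 := by
  intro u hu v hv
  let ψ : V →ₛₗ[starRingEnd ℂ] ℂ :=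
    { toFun := fun w => φ w v
      map_add' := fun a b => hadd_l a b v
      map_smul' := fun a w => by simpa using hsmul_l a w v }
  suffices hle : (⨆ l : S, Module.End.maxGenEigenspace C (l : ℂ)) ≤ LinearMap.ker ψ by
    exact LinearMap.mem_ker.1 (hle hu)
  apply iSup_le
  rintro ⟨l, hl⟩ w hw
  rw [Module.End.mem_maxGenEigenspace] at hw
  obtain ⟨j, hj⟩ := hw
  rw [LinearMap.mem_ker]
  exact orth_iSup_right C φ hadd_l hsmul_l hadd_r hsmul_r hsa l j w hj T
    (fun m hm => hST l hl m hm) v hv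

end Stmt17Aux2
namespace Stmt17Aux3

variable {n : ℕ}

/-- The companion ("Stroh") endomorphism of the quadratic matrix polynomial. -/
noncomputable def compEnd (P R : Matrix (Fin n) (Fin n) ℂ) :
    Module.End ℂ ((Fin n → ℂ) × (Fin n → ℂ)) where
  toFun u := (u.2, -(P *ᵥ u.1) - R *ᵥ u.2)
  map_add' u v := by
    refine Prod.ext rfl ?_
    show -(P *ᵥ (u.1 + v.1)) - R *ᵥ (u.2 + v.2) = _
    simp only [mulVec_add, Prod.snd_add]
    abel
  map_smul' a u := by
    refine Prod.ext rfl ?_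
    show -(P *ᵥ (a • u.1)) - R *ᵥ (a • u.2) = _
    simp only [mulVec_smul, Prod.smul_snd, smul_sub, smul_neg, RingHom.id_apply]

@[simp] lemma compEnd_apply (P R : Matrix (Fin n) (Fin n) ℂ) (u) :
    compEnd P R u = (u.2, -(P *ᵥ u.1) - R *ᵥ u.2) := rfl

/-- The indefinite sesquilinear form attached to the companion matrix. -/
noncomputable def phi (A₀ B₁ : Matrix (Fin n) (Fin n) ℂ) (u v : (Fin n → ℂ) × (Fin n → ℂ)) : ℂ :=
  star u.1 ⬝ᵥ (B₁ *ᵥ v.1) + star u.1 ⬝ᵥ (A₀ *ᵥ v.2) + star u.2 ⬝ᵥ (A₀ *ᵥ v.1)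

lemma phi_add_left (A₀ B₁ : Matrix (Fin n) (Fin n) ℂ) (u w v) :
    phi A₀ B₁ (u + w) v = phi A₀ B₁ u v + phi A₀ B₁ w v := by
  simp only [phi, Prod.fst_add, Prod.snd_add, star_add, add_dotProduct]
  ring

lemma phi_smul_left (A₀ B₁ : Matrix (Fin n) (Fin n) ℂ) (a : ℂ) (u v) :
    phi A₀ B₁ (a • u) v = star a * phi A₀ B₁ u v := by
  simp only [phi, Prod.smul_fst, Prod.smul_snd, star_smul, smul_dotProduct, smul_eq_mul]
  ring

lemma phi_add_right (A₀ B₁ : Matrix (Fin n) (Fin n) ℂ) (u v w) :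
    phi A₀ B₁ u (v + w) = phi A₀ B₁ u v + phi A₀ B₁ u w := by
  simp only [phi, Prod.fst_add, Prod.snd_add, mulVec_add, dotProduct_add]
  ring

lemma phi_smul_right (A₀ B₁ : Matrix (Fin n) (Fin n) ℂ) (a : ℂ) (u v) :
    phi A₀ B₁ u (a • v) = a * phi A₀ B₁ u v := by
  simp only [phi, Prod.smul_fst, Prod.smul_snd, mulVec_smul, dotProduct_smul, smul_eq_mul]
  ring

lemma herm_dot {M : Matrix (Fin n) (Fin n) ℂ} (hM : Mᴴ = M) (x y : Fin n → ℂ) :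
    star (M *ᵥ x) ⬝ᵥ y = star x ⬝ᵥ (M *ᵥ y) := by
  rw [star_mulVec, hM, ← dotProduct_mulVec]

lemma inv_herm_dot {A₀ : Matrix (Fin n) (Fin n) ℂ} (hdet : IsUnit A₀.det)
    (hA₀H : A₀ᴴ = A₀) {X : Matrix (Fin n) (Fin n) ℂ} (hX : Xᴴ = X) (x w : Fin n → ℂ) :
    star ((A₀⁻¹ * X) *ᵥ x) ⬝ᵥ (A₀ *ᵥ w) = star x ⬝ᵥ (X *ᵥ w) := by
  rw [star_mulVec, conjTranspose_mul, conjTranspose_nonsing_inv, hX, hA₀H,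
    ← dotProduct_mulVec, mulVec_mulVec, Matrix.mul_assoc,
    Matrix.nonsing_inv_mul _ hdet, Matrix.mul_one]

/-- Form self-adjointness of the companion endomorphism. -/
lemma phi_sa {A₀ B₁ A₂ : Matrix (Fin n) (Fin n) ℂ} (hdet : IsUnit A₀.det)
    (hA₀H : A₀ᴴ = A₀) (hB₁ : B₁ᴴ = B₁) (hA₂ : A₂ᴴ = A₂) (u v) :
    phi A₀ B₁ (compEnd (A₀⁻¹ * A₂) (A₀⁻¹ * B₁) u) v
      = phi A₀ B₁ u (compEnd (A₀⁻¹ * A₂) (A₀⁻¹ * B₁) v) := by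
  have hcancel : ∀ (X : Matrix (Fin n) (Fin n) ℂ) (w : Fin n → ℂ),
      A₀ *ᵥ ((A₀⁻¹ * X) *ᵥ w) = X *ᵥ w := by
    intro X w
    rw [mulVec_mulVec, Matrix.mul_nonsing_inv_cancel_left _ _ hdet]
  simp only [phi, compEnd_apply]
  rw [show star (-((A₀⁻¹ * A₂) *ᵥ u.1) - (A₀⁻¹ * B₁) *ᵥ u.2)
      = -star ((A₀⁻¹ * A₂) *ᵥ u.1) - star ((A₀⁻¹ * B₁) *ᵥ u.2) by
    rw [star_sub, star_neg]]
  rw [show A₀ *ᵥ (-((A₀⁻¹ * A₂) *ᵥ v.1) - (A₀⁻¹ * B₁) *ᵥ v.2)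
      = -(A₂ *ᵥ v.1) - B₁ *ᵥ v.2 by
    rw [mulVec_sub, mulVec_neg, hcancel, hcancel]]
  simp only [sub_dotProduct, neg_dotProduct, dotProduct_sub, dotProduct_neg]
  rw [inv_herm_dot hdet hA₀H hA₂, inv_herm_dot hdet hA₀H hB₁]
  ring

/-- Nondegeneracy of the form. -/
lemma phi_nondeg {A₀ B₁ : Matrix (Fin n) (Fin n) ℂ} (hdet : IsUnit A₀.det)
    (u : (Fin n → ℂ) × (Fin n → ℂ)) (h : ∀ v, phi A₀ B₁ u v = 0) : u = 0 := by
  have h1 : u.1 = 0 := by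
    have := h (0, A₀⁻¹ *ᵥ u.1)
    simp only [phi, mulVec_zero, dotProduct_zero, zero_add, add_zero, mulVec_mulVec,
      Matrix.mul_nonsing_inv _ hdet, one_mulVec] at this
    exact dotProduct_star_self_eq_zero.1 (by simpa using this)
  have h2 : u.2 = 0 := by
    have := h (A₀⁻¹ *ᵥ u.2, 0)
    simp only [phi, h1, star_zero, zero_dotProduct, mulVec_zero, dotProduct_zero,
      zero_add, add_zero, mulVec_mulVec, Matrix.mul_nonsing_inv _ hdet, one_mulVec] at this
    exact dotProduct_star_self_eq_zero.1 this
  exact Prod.ext h1 h2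

lemma matrix_eq_zero_of_dot (M : Matrix (Fin n) (Fin n) ℂ)
    (h : ∀ x y, star x ⬝ᵥ (M *ᵥ y) = 0) : M = 0 := by
  ext i j
  have := h (Pi.single i 1) (Pi.single j 1)
  have hstar : star (Pi.single i 1 : Fin n → ℂ) = Pi.single i 1 := by
    ext k
    by_cases hk : k = i <;> simp [hk, Pi.single_apply]
  rw [hstar, mulVec_single, single_dotProduct] at this
  simpa using this

lemma matrix_eq_zero_of_mulVec (M : Matrix (Fin n) (Fin n) ℂ)
    (h : ∀ y, M *ᵥ y = 0) : M = 0 := by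
  ext i j
  have := congrFun (h (Pi.single j 1)) i
  rw [mulVec_single] at this
  simpa using this

end Stmt17Aux3

open Stmt17Aux Stmt17Aux2 Stmt17Aux3 in
/-- Spectral factorization of positive definite quadratic matrix polynomials:
if `A₀` is positive definite, `A₂` Hermitian, and `A(s)` is invertible for
every real `s`, then there is a unique matrix `Q` with all eigenvalues in the
open upper half-plane such that `A(s) = (sI − Qᴴ) A₀ (sI − Q)` for all `s`. -/
theorem stmt17 {n : ℕ} (A₀ A₁ A₂ : Matrix (Fin n) (Fin n) ℂ)
    (hA₀ : A₀.PosDef) (hA₂ : A₂.IsHermitian)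
    (A : ℂ → Matrix (Fin n) (Fin n) ℂ)
    (hA : ∀ s : ℂ, A s = s ^ 2 • A₀ + s • (A₁ + A₁ᴴ) + A₂)
    (hreg : ∀ t : ℝ, IsUnit (A (t : ℂ)).det) :
    ∃! Q : Matrix (Fin n) (Fin n) ℂ,
      (∀ μ ∈ spectrum ℂ Q, 0 < μ.im) ∧
        ∀ s : ℂ, A s = (s • 1 - Qᴴ) * A₀ * (s • 1 - Q) := by
  classical
  set B₁ := A₁ + A₁ᴴ with hB₁def
  have hdet : IsUnit A₀.det := (Matrix.isUnit_iff_isUnit_det A₀).1 hA₀.isUnit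
  have hA₀H : A₀ᴴ = A₀ := hA₀.isHermitian
  have hB₁H : B₁ᴴ = B₁ := Matrix.isHermitian_add_transpose_self A₁
  have hA₂H : A₂ᴴ = A₂ := hA₂
  -- the expansion of the claimed factorization
  have expand : ∀ (s : ℂ) (R : Matrix (Fin n) (Fin n) ℂ),
      (s • 1 - Rᴴ) * A₀ * (s • 1 - R)
        = (s * s) • A₀ - s • (A₀ * R) - s • (Rᴴ * A₀) + Rᴴ * A₀ * R := by
    intro s R
    simp only [sub_mul, mul_sub, smul_mul_assoc, mul_smul_comm, one_mul, mul_one,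
      smul_sub, smul_add, smul_smul]
    abel
  -- coefficient extraction from a factorization
  have hcoeff : ∀ R : Matrix (Fin n) (Fin n) ℂ,
      (∀ s : ℂ, A s = (s • 1 - Rᴴ) * A₀ * (s • 1 - R)) →
      A₂ = Rᴴ * A₀ * R ∧ B₁ = -(A₀ * R) - Rᴴ * A₀ := by
    intro R hf
    have h0 := hf 0
    rw [hA 0, expand 0 R] at h0
    simp only [ne_eq, OfNat.ofNat_ne_zero, not_false_eq_true, zero_pow, zero_smul, zero_add,
      add_zero, mul_zero, zero_mul, sub_zero, zero_sub, neg_zero] at h0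
    have h1 := hf 1
    rw [hA 1, expand 1 R] at h1
    simp only [one_pow, one_smul, mul_one, one_mul] at h1
    refine ⟨h0, ?_⟩
    have hB : B₁ = (A₀ - A₀ * R - Rᴴ * A₀ + Rᴴ * A₀ * R) - A₀ - A₂ := by
      rw [← h1]; abel
    rw [hB, h0]; abel
  -- the companion endomorphism and the indefinite form
  set C : Module.End ℂ ((Fin n → ℂ) × (Fin n → ℂ)) :=
    compEnd (A₀⁻¹ * A₂) (A₀⁻¹ * B₁) with hCdef
  have hadd_l := phi_add_left A₀ B₁
  have hsmul_l := phi_smul_left A₀ B₁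
  have hadd_r := phi_add_right A₀ B₁
  have hsmul_r := phi_smul_right A₀ B₁
  have hsa := phi_sa (A₂ := A₂) hdet hA₀H hB₁H hA₂H
  -- no real eigenvalues
  have hrealinj : ∀ μ : ℂ, μ.im = 0 → ∀ u, C u = μ • u → u = 0 := by
    intro μ hμ u hu
    have h1 : u.2 = μ • u.1 := by simpa [hCdef] using congrArg Prod.fst hu
    have h2 : -((A₀⁻¹ * A₂) *ᵥ u.1) - (A₀⁻¹ * B₁) *ᵥ u.2 = μ • u.2 := by
      simpa [hCdef] using congrArg Prod.snd hu
    have h3 : (A μ) *ᵥ u.1 = 0 := by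
      have h4 := congrArg (fun w => A₀ *ᵥ w) h2
      simp only [mulVec_sub, mulVec_neg, mulVec_mulVec,
        Matrix.mul_nonsing_inv_cancel_left _ _ hdet, mulVec_smul] at h4
      rw [h1] at h4
      simp only [mulVec_smul, smul_smul] at h4
      rw [hA μ, add_mulVec, add_mulVec, smul_mulVec, smul_mulVec, pow_two]
      rw [← h4]
      abel
    have hAinj : Function.Injective ((A μ).mulVec) := by
      have : μ = ((μ.re : ℝ) : ℂ) := by
        apply Complex.ext <;> simp [hμ]
      rw [this]
      exact (Matrix.mulVec_injective_iff_isUnit).2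
        ((Matrix.isUnit_iff_isUnit_det _).2 (hreg μ.re))
    have h5 : u.1 = 0 := hAinj (by rw [h3, mulVec_zero])
    refine Prod.ext h5 ?_
    rw [h1, h5, smul_zero]
    rfl
  have hreal_bot : ∀ μ : ℂ, μ.im = 0 → Module.End.maxGenEigenspace C μ = ⊥ := by
    intro μ hμ
    have hker : LinearMap.ker (C - μ • (1 : Module.End ℂ ((Fin n → ℂ) × (Fin n → ℂ)))) = ⊥ := by
      rw [LinearMap.ker_eq_bot']
      intro w hw
      simp only [LinearMap.sub_apply, LinearMap.smul_apply, Module.End.one_apply] at hw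
      exact hrealinj μ hμ w (sub_eq_zero.1 hw)
    have hinj : Function.Injective ⇑(C - μ • (1 : Module.End ℂ ((Fin n → ℂ) × (Fin n → ℂ)))) :=
      LinearMap.ker_eq_bot.mp hker
    rw [Submodule.eq_bot_iff]
    intro u hu
    rw [Module.End.mem_maxGenEigenspace] at hu
    obtain ⟨k, hk⟩ := hu
    rw [Module.End.pow_apply] at hk
    have h0 : (⇑(C - μ • (1 : Module.End ℂ ((Fin n → ℂ) × (Fin n → ℂ)))))^[k] 0 = 0 :=
      Function.iterate_fixed (map_zero _) k
    exact (hinj.iterate k) (hk.trans h0.symm)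
  -- the two spectral subspaces
  set S : Set ℂ := {μ : ℂ | 0 < μ.im} with hSdef
  set S' : Set ℂ := {μ : ℂ | μ.im < 0} with hS'def
  set M : Submodule ℂ ((Fin n → ℂ) × (Fin n → ℂ)) :=
    ⨆ μ : S, Module.End.maxGenEigenspace C (μ : ℂ) with hMdef
  set M' : Submodule ℂ ((Fin n → ℂ) × (Fin n → ℂ)) :=
    ⨆ μ : S', Module.End.maxGenEigenspace C (μ : ℂ) with hM'def
  have hsupTop : M ⊔ M' = ⊤ := by
    refine le_antisymm le_top ?_
    rw [← Module.End.iSup_maxGenEigenspace_eq_top C]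
    apply iSup_le
    intro μ
    rcases lt_trichotomy μ.im 0 with h | h | h
    · exact (le_iSup (fun m : S' => Module.End.maxGenEigenspace C (m : ℂ)) ⟨μ, h⟩).trans
        le_sup_right
    · rw [hreal_bot μ h]; exact bot_le
    · exact (le_iSup (fun m : S => Module.End.maxGenEigenspace C (m : ℂ)) ⟨μ, h⟩).trans
        le_sup_left
  have hCinv : ∀ (T : Set ℂ) (u), u ∈ (⨆ m : T, Module.End.maxGenEigenspace C (m : ℂ)) →
      C u ∈ (⨆ m : T, Module.End.maxGenEigenspace C (m : ℂ)) := by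
    intro T u hu
    have hle : (⨆ m : T, Module.End.maxGenEigenspace C (m : ℂ))
        ≤ Submodule.comap C (⨆ m : T, Module.End.maxGenEigenspace C (m : ℂ)) := by
      apply iSup_le
      rintro ⟨m, hm⟩ w hw
      exact Submodule.mem_comap.2
        ((le_iSup (fun m : T => Module.End.maxGenEigenspace C (m : ℂ)) ⟨m, hm⟩)
          (Module.End.mapsTo_maxGenEigenspace_of_comm (Commute.refl C) m hw))
    exact hle hu
  have hMM : ∀ u ∈ M, ∀ v ∈ M, (phi A₀ B₁) u v = 0 := by
    refine orth_iSup C (phi A₀ B₁) hadd_l hsmul_l hadd_r hsmul_r hsa S S ?_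
    intro l hl m hm heq
    have h1 : (-l.im : ℝ) = m.im := by
      rw [← Complex.conj_im l, heq]
    have hl' : 0 < l.im := hl
    have hm' : 0 < m.im := hm
    linarith
  have hM'M' : ∀ u ∈ M', ∀ v ∈ M', (phi A₀ B₁) u v = 0 := by
    refine orth_iSup C (phi A₀ B₁) hadd_l hsmul_l hadd_r hsmul_r hsa S' S' ?_
    intro l hl m hm heq
    have h1 : (-l.im : ℝ) = m.im := by
      rw [← Complex.conj_im l, heq]
    have hl' : l.im < 0 := hl
    have hm' : m.im < 0 := hm
    linarith
  -- the spectral subspaces are graph subspaces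
  have hkill : ∀ (N : Submodule ℂ ((Fin n → ℂ) × (Fin n → ℂ))),
      (∀ u ∈ N, ∀ v ∈ N, (phi A₀ B₁) u v = 0) → (∀ u ∈ N, C u ∈ N) →
      ∀ u ∈ N, u.1 = 0 → u = 0 := by
    intro N hneut hinv u hu h1
    have h0 : (phi A₀ B₁) u (C u) = 0 := hneut u hu (C u) (hinv u hu)
    have h2 : star u.2 ⬝ᵥ (A₀ *ᵥ u.2) = 0 := by
      simpa [phi, hCdef, h1] using h0
    by_contra hne
    have hu2 : u.2 ≠ 0 := by
      intro h3
      exact hne (Prod.ext h1 h3)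
    exact (hA₀.dotProduct_mulVec_pos hu2).ne' h2
  have hkillM : ∀ u ∈ M, u.1 = 0 → u = 0 := hkill M hMM (hCinv S)
  have hkillM' : ∀ u ∈ M', u.1 = 0 → u = 0 := hkill M' hM'M' (hCinv S')
  -- dimension count
  let π : M →ₗ[ℂ] (Fin n → ℂ) :=
    (LinearMap.fst ℂ (Fin n → ℂ) (Fin n → ℂ)).comp M.subtype
  let π' : M' →ₗ[ℂ] (Fin n → ℂ) :=
    (LinearMap.fst ℂ (Fin n → ℂ) (Fin n → ℂ)).comp M'.subtype
  have hπinj : Function.Injective π := by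
    intro a b hab
    have hsub : ((a : (Fin n → ℂ) × (Fin n → ℂ)) - b) ∈ M := sub_mem a.2 b.2
    have h1 : (((a : (Fin n → ℂ) × (Fin n → ℂ)) - b)).1 = 0 := by
      have : (a : (Fin n → ℂ) × (Fin n → ℂ)).1 = (b : (Fin n → ℂ) × (Fin n → ℂ)).1 := hab
      simp [this]
    exact Subtype.ext (sub_eq_zero.1 (hkillM _ hsub h1))
  have hπ'inj : Function.Injective π' := by
    intro a b hab
    have hsub : ((a : (Fin n → ℂ) × (Fin n → ℂ)) - b) ∈ M' := sub_mem a.2 b.2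
    have h1 : (((a : (Fin n → ℂ) × (Fin n → ℂ)) - b)).1 = 0 := by
      have : (a : (Fin n → ℂ) × (Fin n → ℂ)).1 = (b : (Fin n → ℂ) × (Fin n → ℂ)).1 := hab
      simp [this]
    exact Subtype.ext (sub_eq_zero.1 (hkillM' _ hsub h1))
  have hrank_le : Module.finrank ℂ M ≤ n := by
    have := LinearMap.finrank_le_finrank_of_injective hπinj
    simpa [Module.finrank_fintype_fun_eq_card] using this
  have hrank_le' : Module.finrank ℂ M' ≤ n := by
    have := LinearMap.finrank_le_finrank_of_injective hπ'inj
    simpa [Module.finrank_fintype_fun_eq_card] using this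
  have hsum := Submodule.finrank_sup_add_finrank_inf_eq M M'
  rw [hsupTop, finrank_top] at hsum
  have hrankV : Module.finrank ℂ ((Fin n → ℂ) × (Fin n → ℂ)) = n + n := by
    simp [Module.finrank_prod, Module.finrank_fintype_fun_eq_card]
  rw [hrankV] at hsum
  have hM_n : Module.finrank ℂ M = n := by omega
  have hπbij : Function.Bijective π := by
    refine ⟨hπinj, ?_⟩
    have hfr : Module.finrank ℂ M = Module.finrank ℂ (Fin n → ℂ) := by
      simp [hM_n, Module.finrank_fintype_fun_eq_card]
    exact (LinearMap.injective_iff_surjective_of_finrank_eq_finrank hfr).1 hπinj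
  let e : M ≃ₗ[ℂ] (Fin n → ℂ) := LinearEquiv.ofBijective π hπbij
  let T : (Fin n → ℂ) →ₗ[ℂ] (Fin n → ℂ) :=
    ((LinearMap.snd ℂ (Fin n → ℂ) (Fin n → ℂ)).comp M.subtype).comp e.symm.toLinearMap
  have hTval : ∀ x, ((e.symm x : (Fin n → ℂ) × (Fin n → ℂ))) = (x, T x) := by
    intro x
    refine Prod.ext ?_ rfl
    show (e.symm x : (Fin n → ℂ) × (Fin n → ℂ)).1 = x
    have h2 : e (e.symm x) = x := e.apply_symm_apply x
    rw [LinearEquiv.ofBijective_apply] at h2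
    exact h2
  have hmem : ∀ x, ((x, T x) : (Fin n → ℂ) × (Fin n → ℂ)) ∈ M := by
    intro x
    rw [← hTval x]
    exact (e.symm x).2
  have hgraph : ∀ u ∈ M, u.2 = T u.1 := by
    intro u hu
    have h1 : e ⟨u, hu⟩ = u.1 := LinearEquiv.ofBijective_apply _ _
    have h2 : (⟨u, hu⟩ : M) = e.symm u.1 := by
      rw [← h1, LinearEquiv.symm_apply_apply]
    have h5 := congrArg Prod.snd (hTval u.1)
    rw [← h2] at h5
    exact h5
  set Q := LinearMap.toMatrix' T with hQdef
  have hQ : ∀ x, Q *ᵥ x = T x := by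
    intro x
    rw [← Matrix.toLin'_apply, hQdef, Matrix.toLin'_toMatrix']
  -- quadratic relation
  have hquad : ∀ x, T (T x) = -((A₀⁻¹ * A₂) *ᵥ x) - (A₀⁻¹ * B₁) *ᵥ (T x) := by
    intro x
    have h1 : C ((x, T x) : (Fin n → ℂ) × (Fin n → ℂ)) ∈ M := hCinv S _ (hmem x)
    have h2 := hgraph _ h1
    simp only [hCdef, compEnd_apply] at h2
    exact h2.symm
  -- the coefficient identities
  have hR2 : B₁ + A₀ * Q + Qᴴ * A₀ = 0 := by
    apply matrix_eq_zero_of_dot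
    intro x y
    have h0 : (phi A₀ B₁) ((x, T x) : (Fin n → ℂ) × (Fin n → ℂ)) ((y, T y)) = 0 :=
      hMM _ (hmem x) _ (hmem y)
    simp only [phi] at h0
    rw [← hQ x, ← hQ y, star_mulVec, ← dotProduct_mulVec, mulVec_mulVec, mulVec_mulVec] at h0
    rw [add_mulVec, add_mulVec, dotProduct_add, dotProduct_add]
    linear_combination h0
  have hR1 : A₀ * Q * Q + B₁ * Q + A₂ = 0 := by
    apply matrix_eq_zero_of_mulVec
    intro y
    have h1 := hquad y
    have h2 := congrArg (fun w => A₀ *ᵥ w) h1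
    simp only [mulVec_sub, mulVec_neg, mulVec_mulVec,
      Matrix.mul_nonsing_inv_cancel_left _ _ hdet] at h2
    rw [add_mulVec, add_mulVec]
    rw [show (A₀ * Q * Q) *ᵥ y = A₀ *ᵥ (T (T y)) by
      rw [← mulVec_mulVec, ← mulVec_mulVec]; simp only [hQ]]
    rw [show (B₁ * Q) *ᵥ y = B₁ *ᵥ (T y) by rw [← mulVec_mulVec, hQ]]
    rw [h2]
    abel
  have hB₁eq : B₁ = -(A₀ * Q) - Qᴴ * A₀ := by
    have h : B₁ + (A₀ * Q + Qᴴ * A₀) = 0 := by rw [← add_assoc]; exact hR2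
    rw [add_eq_zero_iff_eq_neg] at h
    rw [h]; abel
  have hA₂eq : A₂ = Qᴴ * A₀ * Q := by
    have h := hR1
    rw [hB₁eq] at h
    have h2 : A₂ = -(A₀ * Q * Q + (-(A₀ * Q) - Qᴴ * A₀) * Q) := by
      rw [eq_neg_iff_add_eq_zero, add_comm]
      exact h
    rw [h2]
    noncomm_ring
  -- the factorization
  have hfact : ∀ s : ℂ, A s = (s • 1 - Qᴴ) * A₀ * (s • 1 - Q) := by
    intro s
    rw [hA s, expand s Q, hB₁eq, hA₂eq, pow_two]
    simp only [smul_sub, smul_neg]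
    abel
  -- the spectrum condition
  have hspec : ∀ μ ∈ spectrum ℂ Q, 0 < μ.im := by
    intro μ hμ
    have hE : Module.End.HasEigenvalue (Matrix.toLinAlgEquiv' Q) μ :=
      Module.End.hasEigenvalue_iff_mem_spectrum.2
        (by rw [AlgEquiv.spectrum_eq Matrix.toLinAlgEquiv' Q]; exact hμ)
    obtain ⟨x, hx⟩ := hE.exists_hasEigenvector
    have hxQ : Q *ᵥ x = μ • x := by
      have := Module.End.mem_eigenspace_iff.1 hx.1
      rw [show (Matrix.toLinAlgEquiv' Q) x = Q *ᵥ x from rfl] at this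
      exact this
    have hTx : T x = μ • x := by rw [← hQ]; exact hxQ
    have hu : ((x, T x) : (Fin n → ℂ) × (Fin n → ℂ)) ∈ M := hmem x
    have hune : ((x, T x) : (Fin n → ℂ) × (Fin n → ℂ)) ≠ 0 := by
      intro h0
      exact hx.2 (congrArg Prod.fst h0)
    have hCu : C ((x, T x) : (Fin n → ℂ) × (Fin n → ℂ))
        = μ • ((x, T x) : (Fin n → ℂ) × (Fin n → ℂ)) := by
      have h1 : C ((x, T x) : (Fin n → ℂ) × (Fin n → ℂ)) = (T x, T (T x)) := by
        simp only [hCdef, compEnd_apply]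
        exact Prod.ext rfl (hquad x).symm
      rw [h1, hTx, _root_.map_smul, hTx]
      rfl
    by_contra him
    push_neg at him
    rcases eq_or_lt_of_le him with h | h
    · exact hune (hrealinj μ h _ hCu)
    · -- μ.im < 0
      have hpow1 : ((C - μ • (1 : Module.End ℂ ((Fin n → ℂ) × (Fin n → ℂ)))) ^ 1)
          ((x, T x) : (Fin n → ℂ) × (Fin n → ℂ)) = 0 := by
        simp only [pow_one, LinearMap.sub_apply, LinearMap.smul_apply, Module.End.one_apply]
        rw [hCu, sub_self]
      have horthM' : ∀ v ∈ M', (phi A₀ B₁) ((x, T x) : (Fin n → ℂ) × (Fin n → ℂ)) v = 0 := by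
        refine orth_iSup_right C (phi A₀ B₁) hadd_l hsmul_l hadd_r hsmul_r hsa μ 1 _ hpow1 S' ?_
        intro m hm heq
        have h1 : (-μ.im : ℝ) = m.im := by rw [← Complex.conj_im μ, heq]
        have hm' : m.im < 0 := hm
        linarith
      have hall : ∀ v, (phi A₀ B₁) ((x, T x) : (Fin n → ℂ) × (Fin n → ℂ)) v = 0 := by
        intro v
        have hv : v ∈ M ⊔ M' := by rw [hsupTop]; trivial
        obtain ⟨v₁, hv₁, v₂, hv₂, rfl⟩ := Submodule.mem_sup.1 hv
        rw [hadd_r, hMM _ hu v₁ hv₁, horthM' v₂ hv₂, add_zero]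
      exact hune (phi_nondeg hdet _ hall)
  -- uniqueness
  have huniq : ∀ Q₁ Q₂ : Matrix (Fin n) (Fin n) ℂ,
      (∀ μ ∈ spectrum ℂ Q₁, 0 < μ.im) →
      (∀ s : ℂ, A s = (s • 1 - Q₁ᴴ) * A₀ * (s • 1 - Q₁)) →
      (∀ μ ∈ spectrum ℂ Q₂, 0 < μ.im) →
      (∀ s : ℂ, A s = (s • 1 - Q₂ᴴ) * A₀ * (s • 1 - Q₂)) → Q₁ = Q₂ := by
    intro Q₁ Q₂ hs₁ hf₁ hs₂ hf₂
    obtain ⟨hA₂₁, hB₁₁⟩ := hcoeff Q₁ hf₁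
    obtain ⟨hA₂₂, hB₁₂⟩ := hcoeff Q₂ hf₂
    have hlin : A₀ * Q₁ + Q₁ᴴ * A₀ = A₀ * Q₂ + Q₂ᴴ * A₀ := by
      have h1 : -(A₀ * Q₁) - Q₁ᴴ * A₀ = -(A₀ * Q₂) - Q₂ᴴ * A₀ := by
        rw [← hB₁₁, ← hB₁₂]
      have h2 := congrArg (fun X => -X) h1
      simpa [neg_sub, neg_neg, neg_add_rev] using by
        rw [show A₀ * Q₁ + Q₁ᴴ * A₀ = -(-(A₀ * Q₁) - Q₁ᴴ * A₀) by abel,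
          show A₀ * Q₂ + Q₂ᴴ * A₀ = -(-(A₀ * Q₂) - Q₂ᴴ * A₀) by abel, h1]
    set D := A₀ * (Q₁ - Q₂) with hDdef
    have hD2 : D = Q₂ᴴ * A₀ - Q₁ᴴ * A₀ := by
      rw [hDdef, Matrix.mul_sub]
      have : A₀ * Q₁ = A₀ * Q₂ + Q₂ᴴ * A₀ - Q₁ᴴ * A₀ := by
        rw [← hlin]; abel
      rw [this]; abel
    have hsyl : Q₁ᴴ * D = D * Q₂ := by
      have hL : Q₁ᴴ * D = A₂ - Q₁ᴴ * A₀ * Q₂ := by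
        rw [hDdef, Matrix.mul_sub, Matrix.mul_sub, ← Matrix.mul_assoc, ← Matrix.mul_assoc, ← hA₂₁]
      have hR : D * Q₂ = A₂ - Q₁ᴴ * A₀ * Q₂ := by
        rw [hD2, Matrix.sub_mul, ← hA₂₂]
      rw [hL, hR]
    have hdisj : ∀ μ : ℂ, μ ∈ spectrum ℂ Q₁ᴴ → μ ∈ spectrum ℂ Q₂ → False := by
      intro μ h1 h2
      have h3 : (starRingEnd ℂ) μ ∈ spectrum ℂ Q₁ := (spectrum_conjTranspose Q₁ μ).1 h1
      have h4 : 0 < ((starRingEnd ℂ) μ).im := hs₁ _ h3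
      have h5 : 0 < μ.im := hs₂ _ h2
      rw [Complex.conj_im] at h4
      linarith
    have hD0 : D = 0 := sylvester Q₁ᴴ Q₂ D hsyl hdisj
    have : Q₁ - Q₂ = 0 := by
      have := congrArg (fun X => A₀⁻¹ * X) hD0
      simpa [hDdef, Matrix.nonsing_inv_mul_cancel_left _ _ hdet] using this
    exact sub_eq_zero.1 this
  exact ⟨Q, ⟨hspec, hfact⟩, fun y hy => huniq y Q hy.1 hy.2 hspec hfact⟩
end

section
/- Real principal type range–kernel duality: Let A(x) and B(x) be continuous (or smooth) families of n×n complex matrices depending on a real parameter x, and a(x) a real-valued differentiable function, such that B(x)A(x) = a(x)I = A(x)B(x) for all x. Suppose a(x₀) = 0 and a'(x₀) ≠ 0. Then at x = x₀: range(B) = ker(A) and range(A) = ker(B). -/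
open Matrix

attribute [local instance] Matrix.normedAddCommGroup Matrix.normedSpace

lemma aux_deriv_mul {n : ℕ} (A B : ℝ → Matrix (Fin n) (Fin n) ℂ)
    (A' B' : Matrix (Fin n) (Fin n) ℂ) (x₀ : ℝ)
    (hA : HasDerivAt A A' x₀) (hB : HasDerivAt B B' x₀) :
    HasDerivAt (fun x => B x * A x) (B' * A x₀ + B x₀ * A') x₀ := by
  have hAe : ∀ i j, HasDerivAt (fun x => A x i j) (A' i j) x₀ := by
    intro i j
    exact hasDerivAt_pi.mp (hasDerivAt_pi.mp hA i) j
  have hBe : ∀ i j, HasDerivAt (fun x => B x i j) (B' i j) x₀ := by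
    intro i j
    exact hasDerivAt_pi.mp (hasDerivAt_pi.mp hB i) j
  refine hasDerivAt_pi.mpr ?_
  intro i
  rw [hasDerivAt_pi]
  intro j
  have : ∀ x, (B x * A x) i j = ∑ k, B x i k * A x k j := fun x => Matrix.mul_apply
  simp only [this]
  have : (B' * A x₀ + B x₀ * A') i j
      = ∑ k, (B' i k * A x₀ k j + B x₀ i k * A' k j) := by
    simp [Matrix.mul_apply, Matrix.add_apply, Finset.sum_add_distrib]
  rw [this]
  exact HasDerivAt.fun_sum fun k _ => (hBe i k).mul (hAe k j)

lemma aux_rk {n : ℕ} (P Q D E : Matrix (Fin n) (Fin n) ℂ) (c : ℂ) (hc : c ≠ 0)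
    (h1 : P * Q = 0) (h2 : E * P + Q * D = c • 1) :
    LinearMap.range Q.mulVecLin = LinearMap.ker P.mulVecLin := by
  apply le_antisymm
  · rintro _ ⟨v, rfl⟩
    simp only [LinearMap.mem_ker, Matrix.mulVecLin_apply, Matrix.mulVec_mulVec, h1,
      Matrix.zero_mulVec]
  · intro v hv
    simp only [LinearMap.mem_ker, Matrix.mulVecLin_apply] at hv
    refine ⟨c⁻¹ • (D *ᵥ v), ?_⟩
    have hEv : (E * P + Q * D) *ᵥ v = c • v := by rw [h2, Matrix.smul_mulVec, Matrix.one_mulVec]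
    rw [Matrix.add_mulVec, ← Matrix.mulVec_mulVec, ← Matrix.mulVec_mulVec, hv,
      Matrix.mulVec_zero, zero_add] at hEv
    rw [Matrix.mulVecLin_apply, Matrix.mulVec_smul, hEv, smul_smul,
      inv_mul_cancel₀ hc, one_smul]

/-- Real principal type range–kernel duality: if `B(x)A(x) = a(x)I = A(x)B(x)`
for differentiable families of matrices `A`, `B` and a real scalar function
`a` with `a(x₀) = 0` and `a'(x₀) ≠ 0`, then at `x₀` the range of `B` equals
the kernel of `A` and the range of `A` equals the kernel of `B`. -/
theorem stmt19 {n : ℕ} (A B : ℝ → Matrix (Fin n) (Fin n) ℂ)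
    (a : ℝ → ℝ) (x₀ : ℝ)
    (A' B' : Matrix (Fin n) (Fin n) ℂ) (a' : ℝ)
    (hAcont : Continuous A) (hBcont : Continuous B) (hacont : Continuous a)
    (hA' : HasDerivAt A A' x₀) (hB' : HasDerivAt B B' x₀)
    (ha' : HasDerivAt a a' x₀)
    (hBA : ∀ x : ℝ, B x * A x = (a x : ℂ) • 1)
    (hAB : ∀ x : ℝ, A x * B x = (a x : ℂ) • 1)
    (ha₀ : a x₀ = 0) (ha'0 : a' ≠ 0) :
    LinearMap.range (B x₀).mulVecLin = LinearMap.ker (A x₀).mulVecLin ∧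
      LinearMap.range (A x₀).mulVecLin = LinearMap.ker (B x₀).mulVecLin := by
  have hscal : HasDerivAt (fun x => ((a x : ℂ)) • (1 : Matrix (Fin n) (Fin n) ℂ))
      (((a' : ℂ)) • 1) x₀ := (ha'.ofReal_comp).smul_const 1
  have hca' : (a' : ℂ) ≠ 0 := by exact_mod_cast ha'0
  have key1 : B' * A x₀ + B x₀ * A' = (a' : ℂ) • 1 := by
    have h1 := aux_deriv_mul A B A' B' x₀ hA' hB'
    simp only [hBA] at h1
    exact h1.unique hscal
  have key2 : A' * B x₀ + A x₀ * B' = (a' : ℂ) • 1 := by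
    have h1 := aux_deriv_mul B A B' A' x₀ hB' hA'
    simp only [hAB] at h1
    exact h1.unique hscal
  have hAB0 : A x₀ * B x₀ = 0 := by rw [hAB, ha₀]; simp
  have hBA0 : B x₀ * A x₀ = 0 := by rw [hBA, ha₀]; simp
  exact ⟨aux_rk (A x₀) (B x₀) A' B' (a' : ℂ) hca' hAB0 key1,
    aux_rk (B x₀) (A x₀) B' A' (a' : ℂ) hca' hBA0 key2⟩
end
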